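/- Let A, B, C be finite-dimensional complex vector spaces with dim A = a, and let T ∈ A ⊗ B ⊗ C have rank at most r. Then rank(T_A^{∧p}) ≤ r · C(a−1, p). -/

import Mathlib

set_option maxHeartbeats 1000000
set_option synthInstance.maxHeartbeats 400000


open TensorProduct

noncomputable section
namespace LO

variable {A B C : Type*} [AddCommGroup A] [Module ℂ A] [AddCommGroup B] [Module ℂ B]
  [AddCommGroup C] [Module ℂ C]

/-- The rank of a tensor `T ∈ A ⊗ B ⊗ C`: the least `r` such that `T` is a sum of `r`
decomposable (rank-one) tensors. -/
def tensorRank (T : A ⊗[ℂ] (B ⊗[ℂ] C)) : ℕ :=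
  sInf {r : ℕ | ∃ (a : Fin r → A) (b : Fin r → B) (c : Fin r → C),
    T = ∑ i, a i ⊗ₜ[ℂ] (b i ⊗ₜ[ℂ] c i)}

/-- The flattening `T_B : B^* → A ⊗ C` of a tensor `T ∈ A ⊗ B ⊗ C`, characterized by
`T_B(β) = (id_A ⊗ β ⊗ id_C)(T)`. -/
def flatB (T : A ⊗[ℂ] (B ⊗[ℂ] C)) : Module.Dual ℂ B →ₗ[ℂ] A ⊗[ℂ] C :=
  dualTensorHom ℂ (Module.Dual ℂ B) (A ⊗[ℂ] C)
    ((TensorProduct.map (Module.Dual.eval ℂ B) LinearMap.id)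
      ((TensorProduct.leftComm ℂ A B C) T))

/-- The `k`-th exterior power `Λ^k M` (as a submodule of the exterior algebra). -/
def ExtPow (k : ℕ) (M : Type*) [AddCommGroup M] [Module ℂ M] :
    Submodule ℂ (ExteriorAlgebra ℂ M) := ⋀[ℂ]^k M

/-- Wedge of a vector with an element of the `p`-th exterior power. -/
def wedgeAux (p : ℕ) (a : A) (w : ExtPow p A) : ExtPow (p+1) A :=
  ⟨ExteriorAlgebra.ι ℂ a * (w : ExteriorAlgebra ℂ A), by
    have h1 : ExteriorAlgebra.ι ℂ a ∈ ⋀[ℂ]^1 A := by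
      show ExteriorAlgebra.ι ℂ a ∈
        (LinearMap.range (ExteriorAlgebra.ι ℂ : A →ₗ[ℂ] ExteriorAlgebra ℂ A)) ^ 1
      rw [pow_one]; exact LinearMap.mem_range_self _ a
    have h2 : (w : ExteriorAlgebra ℂ A) ∈ ⋀[ℂ]^p A := w.2
    have h := SetLike.mul_mem_graded h1 h2
    rw [Nat.add_comm 1 p] at h
    exact h⟩

/-- The wedge (skew-symmetrization) product as a bilinear map `A → Λ^p A → Λ^{p+1} A`. -/
def wedgeMap (p : ℕ) : A →ₗ[ℂ] (↥(ExtPow p A) →ₗ[ℂ] ↥(ExtPow (p+1) A)) :=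
  LinearMap.mk₂ ℂ (wedgeAux p)
    (fun a₁ a₂ w => Subtype.ext (by simp [wedgeAux, add_mul]))
    (fun c a w => Subtype.ext (by simp [wedgeAux, smul_mul_assoc]))
    (fun a w₁ w₂ => Subtype.ext (by simp [wedgeAux, mul_add]))
    (fun c a w => Subtype.ext (by simp [wedgeAux, mul_smul_comm]))

/-- The map `T_A^{∧p} : B^* ⊗ Λ^p A → Λ^{p+1} A ⊗ C`, obtained from the flattening `T_B`
by tensoring with the identity of `Λ^p A` and skew-symmetrizing the `A ⊗ Λ^p A` factor. -/
def TAp (p : ℕ) (T : A ⊗[ℂ] (B ⊗[ℂ] C)) :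
    (Module.Dual ℂ B) ⊗[ℂ] ↥(ExtPow p A) →ₗ[ℂ] ↥(ExtPow (p+1) A) ⊗[ℂ] C :=
  (TensorProduct.map (TensorProduct.lift (wedgeMap (A := A) p)) (LinearMap.id : C →ₗ[ℂ] C))
  ∘ₗ ((TensorProduct.assoc ℂ A (↥(ExtPow p A)) C).symm.toLinearMap)
  ∘ₗ (TensorProduct.congr (LinearEquiv.refl ℂ A)
        (TensorProduct.comm ℂ C (↥(ExtPow p A)))).toLinearMap
  ∘ₗ (TensorProduct.assoc ℂ A C (↥(ExtPow p A))).toLinearMap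
  ∘ₗ (TensorProduct.map (flatB T) (LinearMap.id : ↥(ExtPow p A) →ₗ[ℂ] ↥(ExtPow p A)))

instance instACGExtPow (k : ℕ) : AddCommGroup ↥(ExtPow k A) := Submodule.addCommGroup (ExtPow k A)

section Aux
open Module Submodule ExteriorAlgebra

-- decomposition existence, inner
lemma exists_decomp2 {R B C : Type*} [CommRing R] [AddCommGroup B] [Module R B]
    [AddCommGroup C] [Module R C] (z : B ⊗[R] C) :
    ∃ (n : ℕ) (g : Fin n → B) (h : Fin n → C), z = ∑ i, g i ⊗ₜ[R] h i := by
  induction z using TensorProduct.induction_on with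
  | zero => exact ⟨0, Fin.elim0, Fin.elim0, by simp⟩
  | tmul b c => exact ⟨1, fun _ => b, fun _ => c, by simp⟩
  | add x y hx hy =>
      obtain ⟨n, g, h, rfl⟩ := hx
      obtain ⟨m, g', h', rfl⟩ := hy
      refine ⟨n + m, Fin.append g g', Fin.append h h', ?_⟩
      rw [Fin.sum_univ_add]
      simp [Fin.append_left, Fin.append_right]

lemma exists_decomp3 {R A B C : Type*} [CommRing R] [AddCommGroup A] [Module R A]
    [AddCommGroup B] [Module R B] [AddCommGroup C] [Module R C] (T : A ⊗[R] (B ⊗[R] C)) :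
    ∃ (n : ℕ) (f : Fin n → A) (g : Fin n → B) (h : Fin n → C),
      T = ∑ i, f i ⊗ₜ[R] (g i ⊗ₜ[R] h i) := by
  induction T using TensorProduct.induction_on with
  | zero => exact ⟨0, Fin.elim0, Fin.elim0, Fin.elim0, by simp⟩
  | tmul a z =>
      obtain ⟨n, g, h, rfl⟩ := exists_decomp2 z
      exact ⟨n, fun _ => a, g, h, by rw [tmul_sum]⟩
  | add x y hx hy =>
      obtain ⟨n, f, g, h, rfl⟩ := hx
      obtain ⟨m, f', g', h', rfl⟩ := hy
      refine ⟨n + m, Fin.append f f', Fin.append g g', Fin.append h h', ?_⟩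
      rw [Fin.sum_univ_add]
      simp [Fin.append_left, Fin.append_right]

lemma range_sum_le_sup {ι M N : Type*} [DecidableEq ι] [AddCommGroup M] [Module ℂ M] [AddCommGroup N]
    [Module ℂ N] (s : Finset ι) (f : ι → M →ₗ[ℂ] N) (W : ι → Submodule ℂ N)
    (hr : ∀ i, LinearMap.range (f i) ≤ W i) :
    LinearMap.range (∑ i ∈ s, f i) ≤ s.sup W := by
  induction s using Finset.induction_on with
  | empty => simp
  | @insert a s ha ih =>
      rw [Finset.sum_insert ha, Finset.sup_insert]
      rintro x ⟨y, rfl⟩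
      exact add_mem_sup (hr a ⟨y, rfl⟩) (ih ⟨y, rfl⟩)

lemma finrank_sup_bound {ι N : Type*} [DecidableEq ι] [AddCommGroup N] [Module ℂ N]
    (s : Finset ι) (W : ι → Submodule ℂ N) (hW : ∀ i, FiniteDimensional ℂ (W i)) :
    FiniteDimensional ℂ ↥(s.sup W) ∧ finrank ℂ ↥(s.sup W) ≤ ∑ i ∈ s, finrank ℂ (W i) := by
  induction s using Finset.induction_on with
  | empty => simp; infer_instance
  | @insert a s ha ih =>
      obtain ⟨h1, h2⟩ := ih
      have := hW a
      rw [Finset.sup_insert, Finset.sum_insert ha]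
      refine ⟨inferInstance, ?_⟩
      exact le_trans (Submodule.finrank_add_le_finrank_add_finrank _ _)
        (Nat.add_le_add_left h2 _)

lemma finrank_range_sum_le {ι M N : Type*} [DecidableEq ι] [AddCommGroup M] [Module ℂ M] [AddCommGroup N]
    [Module ℂ N] (s : Finset ι) (f : ι → M →ₗ[ℂ] N) (W : ι → Submodule ℂ N)
    (hW : ∀ i, FiniteDimensional ℂ (W i)) (hr : ∀ i, LinearMap.range (f i) ≤ W i) :
    finrank ℂ (LinearMap.range (∑ i ∈ s, f i)) ≤ ∑ i ∈ s, finrank ℂ (W i) := by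
  obtain ⟨h1, h2⟩ := finrank_sup_bound s W hW
  exact le_trans (Submodule.finrank_mono (range_sum_le_sup s f W hr)) h2

-- single basis-tuple products lie in span of sorted ones
lemma key_span {A : Type*} [AddCommGroup A] [Module ℂ A] [FiniteDimensional ℂ A]
    (a p : ℕ) (ha : Module.finrank ℂ A = a) (a₀ : A) :
    ∃ G : Finset (ExteriorAlgebra ℂ A), G.card ≤ Nat.choose (a-1) p ∧
      (↑G : Set (ExteriorAlgebra ℂ A)) ⊆ ↑(⋀[ℂ]^(p+1) A) ∧
      ∀ x ∈ ⋀[ℂ]^p A, ι ℂ a₀ * x ∈ Submodule.span ℂ (↑G : Set (ExteriorAlgebra ℂ A)) := by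
  by_cases h0 : a₀ = 0
  · refine ⟨∅, by simp, by simp, ?_⟩
    intro x hx
    simp [h0]
  -- basis containing a₀
  have hli : LinearIndepOn ℂ id ({a₀} : Set A) := (linearIndepOn_singleton_iff ℂ).mpr h0
  set κ := ↥(hli.extend (Set.subset_univ _)) with hκ
  haveI : Fintype κ := FiniteDimensional.fintypeBasisIndex (Module.Basis.extend hli)
  haveI : DecidableEq κ := Classical.decEq _
  haveI : DecidableEq (ExteriorAlgebra ℂ A) := Classical.decEq _
  haveI : LinearOrder κ := LinearOrder.lift' (Fintype.equivFin κ) (Equiv.injective _)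
  set b : Basis κ ℂ A := Module.Basis.extend hli with hb
  have hmem : a₀ ∈ hli.extend (Set.subset_univ _) :=
    hli.subset_extend _ (Set.mem_singleton _)
  set i₀ : κ := ⟨a₀, hmem⟩ with hi₀
  have hbi₀ : b i₀ = a₀ := Module.Basis.extend_apply_self hli i₀
  have hcard : Fintype.card κ = a := by rw [← ha, Module.finrank_eq_card_basis b]
  -- index finsets
  set F : Finset (Finset κ) :=
    ((Finset.univ.erase i₀).powersetCard p).image (insert i₀) with hF
  have hFcard : F.card ≤ Nat.choose (a-1) p := by
    refine le_trans (Finset.card_image_le) ?_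
    rw [Finset.card_powersetCard, Finset.card_erase_of_mem (Finset.mem_univ _),
      Finset.card_univ, hcard]
  -- generators
  set wS : Finset κ → ExteriorAlgebra ℂ A := fun S =>
    if h : S.card = p + 1 then ιMulti ℂ (p+1) (fun i => b (S.orderIsoOfFin h i)) else 0
    with hwS
  refine ⟨F.image wS, le_trans Finset.card_image_le hFcard, ?_, ?_⟩
  · intro x hx
    simp only [Finset.coe_image, Set.mem_image] at hx
    obtain ⟨S, _, rfl⟩ := hx
    by_cases h : S.card = p + 1
    · rw [hwS]; simp only [dif_pos h]
      exact ιMulti_range ℂ (p+1) (Set.mem_range_self _)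
    · rw [hwS]; simp only [dif_neg h]
      exact Submodule.zero_mem _
  -- main containment
  have hgen : ∀ v : Fin p → A, ι ℂ a₀ * ιMulti ℂ p v ∈
      Submodule.span ℂ (↑(F.image wS) : Set (ExteriorAlgebra ℂ A)) := by
    intro v
    have expand : ιMulti ℂ p v
        = ∑ m : Fin p → κ, (∏ i, b.repr (v i) (m i)) • ιMulti ℂ p (fun i => b (m i)) := by
      conv_lhs => rw [show v = fun i => ∑ j, b.repr (v i) j • b j from
        funext fun i => (b.sum_repr (v i)).symm]
      rw [show ((ιMulti ℂ p (M := A)) fun i => ∑ j, b.repr (v i) j • b j)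
          = (ιMulti ℂ p (M := A)).toMultilinearMap (fun i => ∑ j, b.repr (v i) j • b j) from rfl,
        MultilinearMap.map_sum]
      refine Finset.sum_congr rfl fun m _ => ?_
      rw [MultilinearMap.map_smul_univ]
      rfl
    rw [expand, Finset.mul_sum]
    refine Submodule.sum_mem _ fun m _ => ?_
    rw [mul_smul_comm]
    refine Submodule.smul_mem _ _ ?_
    -- per-tuple claim
    have hcons : ι ℂ a₀ * ιMulti ℂ p (fun i => b (m i))
        = ιMulti ℂ (p+1) (fun i => b ((Fin.cons i₀ m : Fin (p+1) → κ) i)) := by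
      rw [ιMulti_succ_apply]
      simp [Matrix.vecTail, Fin.cons_zero, hbi₀, Function.comp_def, Fin.cons_succ]
    rw [hcons]
    set m' : Fin (p+1) → κ := (Fin.cons i₀ m : Fin (p+1) → κ) with hm'
    by_cases hinj : Function.Injective m'
    · set S := Finset.image m' Finset.univ with hS
      have hScard : S.card = p + 1 := by
        rw [hS, Finset.card_image_of_injective _ hinj, Finset.card_univ, Fintype.card_fin]
      have hi₀S : i₀ ∈ S := by
        rw [hS]
        exact Finset.mem_image_of_mem _ (Finset.mem_univ 0)
      have hSF : S ∈ F := by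
        rw [hF, Finset.mem_image]
        refine ⟨S.erase i₀, ?_, Finset.insert_erase hi₀S⟩
        rw [Finset.mem_powersetCard]
        exact ⟨Finset.erase_subset_erase i₀ (Finset.subset_univ S),
          by simp [Finset.card_erase_of_mem hi₀S, hScard]⟩
      have hmemS : ∀ i, m' i ∈ S := fun i => Finset.mem_image_of_mem _ (Finset.mem_univ i)
      set σ : Fin (p+1) → Fin (p+1) :=
        fun i => (S.orderIsoOfFin hScard).symm ⟨m' i, hmemS i⟩ with hσ
      have hσinj : Function.Injective σ := by
        intro i j hij
        apply hinj
        have := congrArg (S.orderIsoOfFin hScard) hij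
        simp only [hσ, OrderIso.apply_symm_apply] at this
        exact congrArg Subtype.val this
      set π : Equiv.Perm (Fin (p+1)) :=
        Equiv.ofBijective σ (Finite.injective_iff_bijective.mp hσinj) with hπ
      have hcomp : (fun i => b (m' i))
          = (fun i => b ((S.orderIsoOfFin hScard i : κ))) ∘ π := by
        funext i
        simp only [Function.comp_apply, hπ, Equiv.ofBijective_apply, hσ,
          OrderIso.apply_symm_apply]
      have hperm : ιMulti ℂ (p+1) (fun i => b (m' i))
          = Equiv.Perm.sign π • ιMulti ℂ (p+1) (fun i => b ((S.orderIsoOfFin hScard i : κ))) := by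
        rw [hcomp]
        exact AlternatingMap.map_perm _ _ _
      have hwSS : wS S = ιMulti ℂ (p+1) (fun i => b ((S.orderIsoOfFin hScard i : κ))) := by
        rw [hwS]; simp only [dif_pos hScard]
      have hmemG : wS S ∈ Submodule.span ℂ (↑(F.image wS) : Set (ExteriorAlgebra ℂ A)) :=
        Submodule.subset_span (Finset.mem_coe.mpr (Finset.mem_image_of_mem _ hSF))
      rw [hperm, ← hwSS]
      rcases Int.units_eq_one_or (Equiv.Perm.sign π) with hsgn | hsgn
      · rw [hsgn, one_smul]; exact hmemG
      · rw [hsgn]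
        simp only [Units.neg_smul, one_smul]
        exact Submodule.neg_mem _ hmemG
    · rw [Function.not_injective_iff] at hinj
      obtain ⟨i, j, hij, hne⟩ := hinj
      have : ιMulti ℂ (p+1) (fun i => b (m' i)) = 0 :=
        AlternatingMap.map_eq_zero_of_eq _ _ (by rw [hij]) hne
      rw [this]
      exact Submodule.zero_mem _
  intro x hx
  rw [← ιMulti_span_fixedDegree] at hx
  have h2 := Submodule.apply_mem_span_image_of_mem_span (LinearMap.mulLeft ℂ (ι ℂ a₀)) hx
  refine Submodule.span_le.mpr ?_ h2
  rintro y ⟨z, ⟨v, rfl⟩, rfl⟩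
  exact hgen v

end Aux

section Main
open Module Submodule ExteriorAlgebra

lemma flatB_add (T T' : A ⊗[ℂ] (B ⊗[ℂ] C)) : flatB (T + T') = flatB T + flatB T' := by
  simp [flatB, map_add]

lemma TAp_add (p : ℕ) (T T' : A ⊗[ℂ] (B ⊗[ℂ] C)) :
    TAp p (T + T') = TAp p T + TAp p T' := by
  simp [TAp, flatB_add, TensorProduct.map_add_left, LinearMap.comp_add]

lemma TAp_zero (p : ℕ) : TAp p (0 : A ⊗[ℂ] (B ⊗[ℂ] C)) = 0 := by
  simp [TAp, flatB, map_zero]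

lemma TAp_sum (p : ℕ) {ι : Type*} (s : Finset ι) (T : ι → A ⊗[ℂ] (B ⊗[ℂ] C)) :
    TAp p (∑ i ∈ s, T i) = ∑ i ∈ s, TAp p (T i) := by
  classical
  induction s using Finset.induction_on with
  | empty => simp [TAp_zero]
  | @insert a s ha ih => rw [Finset.sum_insert ha, Finset.sum_insert ha, TAp_add, ih]

lemma TAp_tmul (p : ℕ) (a₀ : A) (b₀ : B) (c₀ : C) (β : Module.Dual ℂ B) (w : ↥(ExtPow p A)) :
    TAp p (a₀ ⊗ₜ[ℂ] (b₀ ⊗ₜ[ℂ] c₀)) (β ⊗ₜ[ℂ] w)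
      = β b₀ • ((wedgeMap p a₀ w) ⊗ₜ[ℂ] c₀) := by
  simp [TAp, flatB, tmul_smul, smul_tmul']

lemma coe_wedgeMap (p : ℕ) (a₀ : A) (w : ↥(ExtPow p A)) :
    (wedgeMap p a₀ w : ExteriorAlgebra ℂ A) = ExteriorAlgebra.ι ℂ a₀ * (w : ExteriorAlgebra ℂ A) :=
  rfl

lemma rankone_bound [FiniteDimensional ℂ A] (a p : ℕ) (ha : Module.finrank ℂ A = a)
    (a₀ : A) (b₀ : B) (c₀ : C) :
    ∃ W : Submodule ℂ (↥(ExtPow (p+1) A) ⊗[ℂ] C), FiniteDimensional ℂ W ∧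
      LinearMap.range (TAp p (a₀ ⊗ₜ[ℂ] (b₀ ⊗ₜ[ℂ] c₀))) ≤ W ∧
      finrank ℂ W ≤ Nat.choose (a-1) p := by
  classical
  obtain ⟨G, hGcard, hGsub, hGspan⟩ := key_span a p ha a₀
  set G' : Finset ↥(ExtPow (p+1) A) :=
    G.attach.image (fun g => (⟨g.1, hGsub g.2⟩ : ↥(ExtPow (p+1) A))) with hG'
  have hwedge : ∀ w : ↥(ExtPow p A),
      wedgeMap p a₀ w ∈ Submodule.span ℂ (↑G' : Set ↥(ExtPow (p+1) A)) := by
    intro w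
    have h1 : (wedgeMap p a₀ w : ExteriorAlgebra ℂ A)
        ∈ Submodule.span ℂ (↑G : Set (ExteriorAlgebra ℂ A)) := by
      rw [coe_wedgeMap]
      exact hGspan _ w.2
    have himg : (↑G : Set (ExteriorAlgebra ℂ A))
        = (ExtPow (p+1) A).subtype '' (↑G' : Set ↥(ExtPow (p+1) A)) := by
      ext x
      constructor
      · intro hx
        have hx' : x ∈ G := hx
        refine ⟨⟨x, hGsub hx'⟩, ?_, rfl⟩
        rw [hG']
        exact Finset.mem_coe.mpr (Finset.mem_image.mpr ⟨⟨x, hx'⟩, Finset.mem_attach _ _, rfl⟩)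
      · rintro ⟨y, hy, rfl⟩
        rw [hG'] at hy
        obtain ⟨⟨z, hz⟩, _, rfl⟩ := Finset.mem_image.mp (Finset.mem_coe.mp hy)
        exact hz
    rw [himg, ← Submodule.map_span] at h1
    obtain ⟨y, hy, hyx⟩ := h1
    have : y = wedgeMap p a₀ w := Subtype.ext hyx
    rwa [← this]
  set W : Submodule ℂ (↥(ExtPow (p+1) A) ⊗[ℂ] C) :=
    Submodule.span ℂ (↑(G'.image (fun u => u ⊗ₜ[ℂ] c₀)) : Set (↥(ExtPow (p+1) A) ⊗[ℂ] C))
    with hW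
  refine ⟨W, inferInstance, ?_, ?_⟩
  · rw [LinearMap.range_eq_map, ← span_tmul_eq_top, Submodule.map_span, Submodule.span_le]
    rintro _ ⟨_, ⟨β, w, rfl⟩, rfl⟩
    rw [SetLike.mem_coe, TAp_tmul]
    refine Submodule.smul_mem _ _ ?_
    have := Submodule.apply_mem_span_image_of_mem_span
      ((TensorProduct.mk ℂ (↥(ExtPow (p+1) A)) C).flip c₀) (hwedge w)
    refine Submodule.span_le.mpr ?_ this
    intro x hx
    obtain ⟨u, hu, rfl⟩ := hx
    exact Submodule.subset_span (by
      simp only [Finset.coe_image, Set.mem_image, Finset.mem_coe]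
      exact ⟨u, hu, rfl⟩)
  · refine le_trans ?_ (le_trans (Nat.le_of_eq rfl) hGcard)
    calc finrank ℂ W ≤ (G'.image (fun u => u ⊗ₜ[ℂ] c₀)).card :=
          finrank_span_finset_le_card _
      _ ≤ G'.card := Finset.card_image_le
      _ ≤ G.card := le_trans Finset.card_image_le (by rw [Finset.card_attach])

end Main


/-- If `T ∈ A ⊗ B ⊗ C` has rank at most `r`, then `rank(T_A^{∧p}) ≤ r · C(a-1, p)`
where `a = dim A`. -/
theorem rank_TAp_le [FiniteDimensional ℂ A] [FiniteDimensional ℂ B] [FiniteDimensional ℂ C]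
    (a p r : ℕ) (ha : Module.finrank ℂ A = a)
    (T : A ⊗[ℂ] (B ⊗[ℂ] C)) (hT : tensorRank T ≤ r) :
    Module.finrank ℂ (LinearMap.range (TAp p T)) ≤ r * Nat.choose (a-1) p := by
  classical
  have hne : {n : ℕ | ∃ (f : Fin n → A) (g : Fin n → B) (h : Fin n → C),
      T = ∑ i, f i ⊗ₜ[ℂ] (g i ⊗ₜ[ℂ] h i)}.Nonempty := by
    obtain ⟨n, f, g, h, hT⟩ := exists_decomp3 T
    exact ⟨n, f, g, h, hT⟩
  have hmem := Nat.sInf_mem hne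
  obtain ⟨f, g, h, hTeq⟩ := hmem
  have hTAp : TAp p T = ∑ i : Fin (tensorRank T), TAp p (f i ⊗ₜ[ℂ] (g i ⊗ₜ[ℂ] h i)) := by
    rw [show TAp p T = TAp p (∑ i, f i ⊗ₜ[ℂ] (g i ⊗ₜ[ℂ] h i)) from by rw [← hTeq]]
    exact TAp_sum p _ _
  choose W hfd hle hrank using fun i : Fin (tensorRank T) =>
    rankone_bound (B := B) (C := C) a p ha (f i) (g i) (h i)
  rw [hTAp]
  calc Module.finrank ℂ (LinearMap.range (∑ i, TAp p (f i ⊗ₜ[ℂ] (g i ⊗ₜ[ℂ] h i))))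
      ≤ ∑ i : Fin (tensorRank T), Module.finrank ℂ (W i) :=
        finrank_range_sum_le _ _ W hfd hle
    _ ≤ ∑ _i : Fin (tensorRank T), Nat.choose (a-1) p :=
        Finset.sum_le_sum fun i _ => hrank i
    _ = tensorRank T * Nat.choose (a-1) p := by
        rw [Finset.sum_const, Finset.card_univ, Fintype.card_fin, smul_eq_mul]
    _ ≤ r * Nat.choose (a-1) p := Nat.mul_le_mul_right _ hT

end LO
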